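/- Let W be a finite-dimensional real inner product space with L a closed convex cone, C ⊆ L an L-stable convex set with Im Q ⊆ C, and Q : int(L*) → L a quasi-conic continuous map. If ⟨f, x⟩ ≥ ⟨f, Q(f)⟩ for all f ∈ int(L*) and all x ∈ C, then for all f ∈ int(L*) and x ∈ C with x ≠ Q(f) one has strict inequality ⟨f, x⟩ > ⟨f, Q(f)⟩. -/

import Mathlib

open scoped InnerProductSpace Pointwise

/-- `W` finite-dimensional real inner product space, `L` a closed
convex cone, `C ⊆ L` an `L`-stable convex set containing `Im Q`, and
`Q : int(L*) → L` a quasi-conic continuous map (strict inequality on `Im Q`).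
If `⟪f, x⟫ ≥ ⟪f, Q f⟫` for all `f ∈ int(L*)` and all `x ∈ C`, then for all
`f ∈ int(L*)` and `x ∈ C` with `x ≠ Q f` one has `⟪f, x⟫ > ⟪f, Q f⟫`. -/
theorem stmt4 {W : Type*} [NormedAddCommGroup W] [InnerProductSpace ℝ W]
    [FiniteDimensional ℝ W]
    (L : Set W) (hLclosed : IsClosed L) (hLconvex : Convex ℝ L)
    (hLcone : ∀ x ∈ L, ∀ c : ℝ, 0 ≤ c → c • x ∈ L)
    (C : Set W) (hCL : C ⊆ L) (hCconvex : Convex ℝ C) (hstable : C + L = C)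
    (Q : W → W)
    (hQcont : ContinuousOn Q (interior {f : W | ∀ x ∈ L, 0 ≤ ⟪f, x⟫_ℝ}))
    (hQmaps : ∀ f ∈ interior {f : W | ∀ x ∈ L, 0 ≤ ⟪f, x⟫_ℝ}, Q f ∈ L)
    (hImQ : Q '' interior {f : W | ∀ x ∈ L, 0 ≤ ⟪f, x⟫_ℝ} ⊆ C)
    (hquasi : ∀ f ∈ interior {f : W | ∀ x ∈ L, 0 ≤ ⟪f, x⟫_ℝ},
      ∀ g ∈ interior {f : W | ∀ x ∈ L, 0 ≤ ⟪f, x⟫_ℝ},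
        Q g ≠ Q f → ⟪f, Q f⟫_ℝ < ⟪f, Q g⟫_ℝ)
    (hge : ∀ f ∈ interior {f : W | ∀ x ∈ L, 0 ≤ ⟪f, x⟫_ℝ},
      ∀ x ∈ C, ⟪f, Q f⟫_ℝ ≤ ⟪f, x⟫_ℝ) :
    ∀ f ∈ interior {f : W | ∀ x ∈ L, 0 ≤ ⟪f, x⟫_ℝ},
      ∀ x ∈ C, x ≠ Q f → ⟪f, Q f⟫_ℝ < ⟪f, x⟫_ℝ := by
  intro f hf x hx hne
  by_contra hlt
  push_neg at hlt
  have heq : ⟪f, x⟫_ℝ = ⟪f, Q f⟫_ℝ := le_antisymm hlt (hge f hf x hx)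
  set S := interior {f : W | ∀ x ∈ L, 0 ≤ ⟪f, x⟫_ℝ} with hS
  set d := x - Q f with hdd
  have hdne : d ≠ 0 := sub_ne_zero.mpr hne
  have hdpos : 0 < ⟪d, d⟫_ℝ := by
    rw [real_inner_self_eq_norm_sq]
    exact pow_pos (norm_pos_iff.mpr hdne) 2
  have hdQf : ⟪d, Q f⟫_ℝ = ⟪d, x⟫_ℝ - ⟪d, d⟫_ℝ := by
    rw [hdd]; simp only [inner_sub_right]; ring
  -- continuity setup
  have hQat : ContinuousAt Q f := hQcont.continuousAt (isOpen_interior.mem_nhds hf)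
  have hφ : Continuous (fun t : ℝ => f - t • d) := by continuity
  have hφ0 : (fun t : ℝ => f - t • d) 0 = f := by simp
  have hcomp : ContinuousAt (fun t : ℝ => ⟪d, Q (f - t • d)⟫_ℝ) 0 := by
    have h1 : ContinuousAt (fun t : ℝ => Q (f - t • d)) 0 :=
      ContinuousAt.comp (by simpa using hQat) (hφ.continuousAt (x := (0 : ℝ)))
    exact ((continuous_const.inner continuous_id).continuousAt).comp h1
  -- eventually conditions near 0
  have hmemS : ∀ᶠ t : ℝ in nhds 0, f - t • d ∈ S := by
    have : (fun t : ℝ => f - t • d) ⁻¹' S ∈ nhds (0 : ℝ) :=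
      hφ.continuousAt (isOpen_interior.mem_nhds (by simpa using hf))
    exact this
  have hlt0 : ∀ᶠ t : ℝ in nhds 0, ⟪d, Q (f - t • d)⟫_ℝ < ⟪d, x⟫_ℝ := by
    have hval : ⟪d, Q (f - (0:ℝ) • d)⟫_ℝ < ⟪d, x⟫_ℝ := by
      simp only [zero_smul, sub_zero]
      rw [hdQf]; linarith
    exact hcomp.eventually_lt continuousAt_const hval
  have hall := (hmemS.and hlt0).filter_mono (nhdsWithin_le_nhds (s := Set.Ioi (0:ℝ)))
  obtain ⟨t, ⟨hgS, hdQg⟩, ht0⟩ := (hall.and self_mem_nhdsWithin).exists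
  set g := f - t • d with hg
  have ht0 : (0:ℝ) < t := ht0
  -- expansions
  have eg : ∀ y : W, ⟪g, y⟫_ℝ = ⟪f, y⟫_ℝ - t * ⟪d, y⟫_ℝ := by
    intro y; rw [hg, inner_sub_left, real_inner_smul_left]
  have hQgC : Q g ∈ C := hImQ ⟨g, hgS, rfl⟩
  have hgx : ⟪g, Q g⟫_ℝ ≤ ⟪g, x⟫_ℝ := hge g hgS x hx
  -- Q g ≠ Q f
  have hQne : Q g ≠ Q f := by
    intro h
    rw [h, eg (Q f), eg x, heq, hdQf] at hgx
    nlinarith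
  have hstrict : ⟪f, Q f⟫_ℝ < ⟪f, Q g⟫_ℝ := hquasi f hf g hgS hQne
  rw [eg (Q g), eg x, heq] at hgx
  nlinarith
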